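/- Let C > 0 and a, b ∈ ℝ, and let Q : [0,∞) → ℝ be twice differentiable with Q''(t) + C·Q(t) = C − b for all t ≥ 0, Q(0) = 1 and Q'(0) = a. If a² + 2b > C, then there exists t* ∈ (0, 2π/√C] with Q(t*) = 0. -/

import Mathlib

open Set Real

set_option maxHeartbeats 1600000 in
/-- For constant doping profile `C > 0`: if `Q'' + C Q = C - b`, `Q 0 = 1`,
`Q' 0 = a`, and `a² + 2b > C`, then `Q` vanishes at some
`t* ∈ (0, 2π/√C]`. -/
theorem constant_doping_Q_vanishes
    (C a b : ℝ) (hC : 0 < C)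
    (Q Q1 : ℝ → ℝ)
    (hQ1 : ∀ t ∈ Ici (0:ℝ), HasDerivWithinAt Q (Q1 t) (Ici 0) t)
    (hQ2 : ∀ t ∈ Ici (0:ℝ), HasDerivWithinAt Q1 (C - b - C * Q t) (Ici 0) t)
    (hQ0 : Q 0 = 1) (hQ10 : Q1 0 = a)
    (hcrit : C < a^2 + 2*b) :
    ∃ t ∈ Ioc (0:ℝ) (2*π / Real.sqrt C), Q t = 0 := by
  obtain ⟨ω, hω⟩ : ∃ x : ℝ, x = Real.sqrt C := ⟨_, rfl⟩
  have hω0 : 0 < ω := hω ▸ Real.sqrt_pos.mpr hC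
  have hω2 : ω ^ 2 = C := hω ▸ Real.sq_sqrt hC.le
  obtain ⟨p, hp⟩ : ∃ x : ℝ, x = b / C := ⟨_, rfl⟩
  obtain ⟨q, hq⟩ : ∃ x : ℝ, x = a / ω := ⟨_, rfl⟩
  -- explicit solution
  set f : ℝ → ℝ := fun t => p * Real.cos (ω * t) + q * Real.sin (ω * t) + (1 - p) with hf
  set f1 : ℝ → ℝ := fun t => -(p * ω) * Real.sin (ω * t) + a * Real.cos (ω * t) with hf1
  clear_value f f1
  have hqω : q * ω = a := by rw [hq]; field_simp
  have hpC : p * C = b := by rw [hp]; field_simp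
  have haω : a * ω = q * C := by
    rw [hq]; field_simp; linear_combination a * hω2
  have hf0 : f 0 = 1 := by simp [hf]
  have hf10 : f1 0 = a := by simp [hf1]
  have hfd : ∀ t : ℝ, HasDerivAt f (f1 t) t := by
    intro t
    have h1 : HasDerivAt (fun t : ℝ => Real.cos (ω * t)) (-Real.sin (ω * t) * ω) t := by
      exact ((Real.hasDerivAt_cos (ω * t)).comp t ((hasDerivAt_id t).const_mul ω)).congr_deriv (by ring)
    have h2 : HasDerivAt (fun t : ℝ => Real.sin (ω * t)) (Real.cos (ω * t) * ω) t := by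
      exact ((Real.hasDerivAt_sin (ω * t)).comp t ((hasDerivAt_id t).const_mul ω)).congr_deriv (by ring)
    have := ((h1.const_mul p).add (h2.const_mul q)).add_const (1 - p)
    rw [hf]
    refine this.congr_deriv ?_
    simp only [hf1]
    linear_combination Real.cos (ω * t) * hqω
  have hf1d : ∀ t : ℝ, HasDerivAt f1 (C - b - C * f t) t := by
    intro t
    have h1 : HasDerivAt (fun t : ℝ => Real.sin (ω * t)) (Real.cos (ω * t) * ω) t := by
      exact ((Real.hasDerivAt_sin (ω * t)).comp t ((hasDerivAt_id t).const_mul ω)).congr_deriv (by ring)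
    have h2 : HasDerivAt (fun t : ℝ => Real.cos (ω * t)) (-Real.sin (ω * t) * ω) t := by
      exact ((Real.hasDerivAt_cos (ω * t)).comp t ((hasDerivAt_id t).const_mul ω)).congr_deriv (by ring)
    have := (h1.const_mul (-(p * ω))).add (h2.const_mul a)
    rw [hf1]
    refine this.congr_deriv ?_
    simp only [hf]
    linear_combination -hpC - p * Real.cos (ω * t) * hω2 - Real.sin (ω * t) * haω
  -- difference and energy
  set u : ℝ → ℝ := fun t => Q t - f t with hu
  set u1 : ℝ → ℝ := fun t => Q1 t - f1 t with hu1
  set E : ℝ → ℝ := fun t => (u1 t) ^ 2 + C * (u t) ^ 2 with hE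
  clear_value u u1 E
  have hud : ∀ t ∈ Ici (0:ℝ), HasDerivWithinAt u (u1 t) (Ici 0) t := by
    intro t ht
    rw [hu, hu1]
    exact (hQ1 t ht).sub ((hfd t).hasDerivWithinAt)
  have hu1d : ∀ t ∈ Ici (0:ℝ), HasDerivWithinAt u1 (-C * u t) (Ici 0) t := by
    intro t ht
    have := (hQ2 t ht).sub ((hf1d t).hasDerivWithinAt)
    rw [hu1]
    refine this.congr_deriv ?_
    rw [hu]; ring
  have hEd : ∀ t ∈ Ici (0:ℝ), HasDerivWithinAt E 0 (Ici 0) t := by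
    intro t ht
    have h1 := ((hu1d t ht).pow 2)
    have h2 := ((hud t ht).pow 2).const_mul C
    have := h1.add h2
    rw [hE]
    refine this.congr_deriv ?_
    ring
  have hEcont : ContinuousOn E (Ici 0) := fun t ht => (hEd t ht).continuousWithinAt
  have hE0 : E 0 = 0 := by simp [hE, hu, hu1, hQ0, hf0, hQ10, hf10]
  have hEzero : ∀ t ∈ Ici (0:ℝ), E t = 0 := by
    intro T hT
    have := constant_of_has_deriv_right_zero (f := E) (a := 0) (b := T)
      (hEcont.mono (Icc_subset_Ici_self))
      (fun x hx => (hEd x hx.1).mono (fun y hy => le_trans hx.1 hy))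
      T (by exact ⟨hT, le_refl T⟩)
    rw [this, hE0]
  have hQf : ∀ t ∈ Ici (0:ℝ), Q t = f t := by
    intro t ht
    have h := hEzero t ht
    simp only [hE] at h
    have h2 : (u t) ^ 2 = 0 := by
      nlinarith [sq_nonneg (u1 t), sq_nonneg (u t), mul_nonneg hC.le (sq_nonneg (u t))]
    have h1 : u t = 0 := by
      exact pow_eq_zero_iff (by norm_num) |>.mp h2
    simpa [hu, sub_eq_zero] using h1
  -- find a point where f is negative
  obtain ⟨R, hR⟩ : ∃ x : ℝ, x = Real.sqrt (p ^ 2 + q ^ 2) := ⟨_, rfl⟩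
  have hR2 : R ^ 2 = p ^ 2 + q ^ 2 := hR ▸ Real.sq_sqrt (by positivity)
  have hRnn : 0 ≤ R := by rw [hR]; exact Real.sqrt_nonneg _
  have hq2 : q ^ 2 = a ^ 2 / C := by rw [hq, div_pow, hω2]
  have hcrit' : (1 - p) ^ 2 < R ^ 2 := by
    rw [hR2, hp, hq2]
    have key : ((b / C) ^ 2 + a ^ 2 / C - (1 - b / C) ^ 2) * C ^ 2 = (a ^ 2 + 2 * b - C) * C := by
      field_simp; ring
    have hpos : 0 < ((b / C) ^ 2 + a ^ 2 / C - (1 - b / C) ^ 2) * C ^ 2 := by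
      rw [key]; exact mul_pos (by linarith) hC
    nlinarith [pow_pos hC 2]
  have hRpos : 0 < R := by nlinarith [sq_nonneg (1 - p)]
  -- find θ ∈ [0, 2π] with cos θ = -p/R, sin θ = -q/R
  have hcs : (-p / R) ^ 2 + (-q / R) ^ 2 = 1 := by
    field_simp
    linarith [hR2]
  have hsq1 : (-p / R) ^ 2 ≤ 1 := by linarith [sq_nonneg (-q / R), hcs]
  have hc1 : -1 ≤ -p / R ∧ -p / R ≤ 1 :=
    abs_le.mp ((sq_le_one_iff_abs_le_one (-p / R)).mp hsq1)
  obtain ⟨θ, hθmem, hθcos, hθsin⟩ :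
      ∃ θ ∈ Icc (0:ℝ) (2 * π), Real.cos θ = -p / R ∧ Real.sin θ = -q / R := by
    rcases le_or_gt 0 (-q / R) with hs | hs
    · refine ⟨Real.arccos (-p / R), ⟨Real.arccos_nonneg _, ?_⟩, Real.cos_arccos hc1.1 hc1.2, ?_⟩
      · linarith [Real.arccos_le_pi (-p / R), Real.pi_pos]
      · rw [Real.sin_arccos]
        rw [show (1 : ℝ) - (-p / R) ^ 2 = (-q / R) ^ 2 by linarith]
        exact Real.sqrt_sq hs
    · refine ⟨2 * π - Real.arccos (-p / R), ⟨?_, ?_⟩, ?_, ?_⟩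
      · linarith [Real.arccos_le_pi (-p / R), Real.pi_pos]
      · linarith [Real.arccos_nonneg (-p / R)]
      · rw [Real.cos_sub, Real.cos_two_pi, Real.sin_two_pi, Real.cos_arccos hc1.1 hc1.2]
        ring
      · rw [Real.sin_sub, Real.cos_two_pi, Real.sin_two_pi, Real.sin_arccos]
        rw [show (1 : ℝ) - (-p / R) ^ 2 = (-q / R) ^ 2 by linarith]
        rw [Real.sqrt_sq_eq_abs, abs_of_nonpos hs.le]
        ring
  obtain ⟨T, hT⟩ : ∃ x : ℝ, x = θ / ω := ⟨_, rfl⟩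
  have hT0 : 0 ≤ T := hT ▸ div_nonneg hθmem.1 hω0.le
  have hTle : T ≤ 2 * π / ω := by
    rw [hT]; gcongr; exact hθmem.2
  have hωT : ω * T = θ := by rw [hT]; field_simp
  have hfT : f T = (1 - p) - R := by
    simp only [hf, hωT, hθcos, hθsin]
    have : p * (-p / R) + q * (-q / R) = -R := by
      field_simp
      linear_combination hR2
    linarith [this]
  have hfTneg : f T < 0 := by
    rw [hfT]
    nlinarith [hcrit', hRpos]
  have hQT : Q T < 0 := by rw [hQf T hT0]; exact hfTneg
  -- IVT
  have hQcont : ContinuousOn Q (Icc 0 T) := fun t ht =>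
    ((hQ1 t ht.1).continuousWithinAt).mono (Icc_subset_Ici_self)
  have h0mem : (0:ℝ) ∈ Icc (Q T) (Q 0) := ⟨hQT.le, by rw [hQ0]; norm_num⟩
  obtain ⟨t, htmem, htzero⟩ := intermediate_value_Icc' hT0 hQcont h0mem
  refine ⟨t, ⟨?_, ?_⟩, htzero⟩
  · rcases eq_or_lt_of_le htmem.1 with h | h
    · exfalso; rw [← h] at htzero; rw [hQ0] at htzero; norm_num at htzero
    · exact h
  · rw [← hω]; exact htmem.2.trans hTle
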